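/- arXiv:1203.6056 — 9 statements merged into one kernel-verified Lean document; each statement's English description precedes it below -/
import Mathlib

section
/- In any G-algebra, x ≻ (y ≻ x) = 1 for all x, y. -/
class GAlgebra (A : Type*) where
  succ : A → A → A
  one : A
  g1 : ∀ x, succ one x = x
  g2 : ∀ x, succ x one = one
  g3 : ∀ x y, succ (succ x y) y = succ (succ y x) x
  g4 : ∀ x y z, succ x (succ y z) = one → succ y (succ x z) = one

open GAlgebra

local infixr:70 " ≻ " => GAlgebra.succ

theorem stmt2 {A : Type*} [GAlgebra A] (x y : A) : x ≻ (y ≻ x) = (one : A) := by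
  have hxx : x ≻ x = (one : A) := by
    have h := g3 x (one : A)
    rw [g2, g1] at h
    exact h.symm
  exact g4 y x x (by rw [hxx, g2])
end

section
/- In any G-algebra, x ≻ (z ≻ ((x ≻ y) ≻ y)) = 1 for all x, y, z. -/
open GAlgebra

local infixr:70 " ≻ " => GAlgebra.succ

theorem stmt3 {A : Type*} [GAlgebra A] (x y z : A) : x ≻ (z ≻ ((x ≻ y) ≻ y)) = (one : A) := by
  have hxx : ∀ a : A, a ≻ a = one := by
    intro a
    have := g3 a (one : A)
    rw [g2, g1] at this; exact this.symm
  have h1 : x ≻ ((x ≻ y) ≻ y) = one := g4 (x ≻ y) x y (hxx (x ≻ y))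
  have h2 : z ≻ (x ≻ ((x ≻ y) ≻ y)) = one := by rw [h1, g2]
  exact g4 z x ((x ≻ y) ≻ y) h2
end

section
/- In any G-algebra, if x ≻ y = 1 and y ≻ z = 1 then x ≻ z = 1 (transitivity). -/
open GAlgebra

local infixr:70 " ≻ " => GAlgebra.succ

theorem stmt4 {A : Type*} [GAlgebra A] (x y z : A) (h1 : x ≻ y = (one : A)) (h2 : y ≻ z = (one : A)) : x ≻ z = (one : A) := by
  have hz : z = (z ≻ y) ≻ y := by
    have h := g3 y z
    rw [h2, g1] at h
    exact h
  rw [hz]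
  apply g4
  rw [h1, g2]
end

section
/- In any G-algebra, if x ≤ y (i.e., x ≻ y = 1) then y ≻ z ≤ x ≻ z (i.e., (y ≻ z) ≻ (x ≻ z) = 1); that is, ≻ is antitone in its first argument. -/
open GAlgebra

local infixr:70 " ≻ " => GAlgebra.succ

theorem stmt6 {A : Type*} [GAlgebra A] (x y z : A) (h : x ≻ y = (one : A)) :
    (y ≻ z) ≻ (x ≻ z) = (one : A) := by
  have h1 : (z ≻ y) ≻ (x ≻ y) = (one : A) := by rw [h, g2]
  have h2 := g4 (z ≻ y) x y h1
  rw [g3 z y] at h2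
  exact g4 x (y ≻ z) z h2
end

section
/- In any G-algebra, if x ≤ z and y ≤ z then (x ≻ y) ≻ y ≤ z. -/
open GAlgebra

local infixr:70 " ≻ " => GAlgebra.succ

theorem stmt7 {A : Type*} [GAlgebra A] (x y z : A) (h1 : x ≻ z = (one : A)) (h2 : y ≻ z = (one : A)) :
    ((x ≻ y) ≻ y) ≻ z = (one : A) := by
  -- z = (z ≻ y) ≻ y
  have hz : (z ≻ y) ≻ y = z := by
    have := g3 y z
    rw [h2, g1] at this
    exact this.symm
  -- x ≻ ((z ≻ y) ≻ y) = 1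
  have s1 : x ≻ ((z ≻ y) ≻ y) = (one : A) := by rw [hz]; exact h1
  -- (z ≻ y) ≻ (x ≻ y) = 1
  have s2 : (z ≻ y) ≻ (x ≻ y) = (one : A) := g4 x (z ≻ y) y s1
  -- y ≻ (x ≻ y) = 1
  have hyy : y ≻ y = (one : A) := by
    have := g3 y one
    simp only [g1, g2] at this
    exact this.symm
  have s3 : y ≻ (x ≻ y) = (one : A) := by
    apply g4
    rw [hyy, g2]
  -- ((x ≻ y) ≻ y) ≻ y = x ≻ y
  have huy : ((x ≻ y) ≻ y) ≻ y = x ≻ y := by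
    rw [g3 (x ≻ y) y, s3, g1]
  -- (z ≻ y) ≻ (((x ≻ y) ≻ y) ≻ y) = 1
  have s4 : (z ≻ y) ≻ (((x ≻ y) ≻ y) ≻ y) = (one : A) := by rw [huy]; exact s2
  have s5 : ((x ≻ y) ≻ y) ≻ ((z ≻ y) ≻ y) = (one : A) := g4 (z ≻ y) _ y s4
  rw [hz] at s5
  exact s5
end

section
/- Every G-algebra is a join semilattice under the order x ≤ y iff x ≻ y = 1, with supremum given by x ∨ y = (x ≻ y) ≻ y. -/
open GAlgebra

local infixr:70 " ≻ " => GAlgebra.succ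

lemma grefl {A : Type*} [GAlgebra A] (x : A) : x ≻ x = (one : A) := by
  have h := g3 x (one : A)
  simp only [g1, g2] at h
  exact h.symm

lemma gabs {A : Type*} [GAlgebra A] (x y : A) : y ≻ (x ≻ y) = (one : A) := by
  apply g4
  rw [grefl, g2]

theorem stmt8 {A : Type*} [GAlgebra A] (x y : A) :
    x ≻ ((x ≻ y) ≻ y) = (one : A) ∧
    y ≻ ((x ≻ y) ≻ y) = (one : A) ∧
    ∀ z : A, x ≻ z = (one : A) → y ≻ z = (one : A) → ((x ≻ y) ≻ y) ≻ z = (one : A) := by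
  refine ⟨?_, ?_, ?_⟩
  · rw [g3]
    apply g4
    rw [grefl, g2]
  · apply g4
    rw [grefl, g2]
  · intro z hx hy
    have hz : (z ≻ y) ≻ y = z := by rw [← g3, hy, g1]
    have hxyy : ((x ≻ y) ≻ y) ≻ y = x ≻ y := by rw [g3, gabs, g1]
    rw [← hz]
    apply g4
    rw [hxyy]
    apply g4
    rw [hz]
    exact hx
end

section
/- Every G⁰-algebra is a meet semilattice where the infimum is given by x ∧ y = ∼(∼x ∨ ∼y) = (((x ≻ 0) ≻ (y ≻ 0)) ≻ (y ≻ 0)) ≻ 0. -/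
open GAlgebra

local infixr:70 " ≻ " => GAlgebra.succ

class G0Algebra (A : Type*) extends GAlgebra A where
  zero : A
  g17 : ∀ x, succ zero x = one

open G0Algebra

section Aux
variable {A : Type*} [GAlgebra A]

lemma g_refl (x : A) : x ≻ x = (one : A) := by
  have h := g3 x (one : A)
  rw [g2, g1] at h
  exact h.symm

lemma g_le1 (a b : A) : a ≻ (b ≻ a) = (one : A) :=
  g4 b a a (by rw [g_refl, g2])

lemma g_join_left (a b : A) : a ≻ ((a ≻ b) ≻ b) = (one : A) :=
  g4 (a ≻ b) a b (g_refl _)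

lemma g_join_right (a b : A) : b ≻ ((a ≻ b) ≻ b) = (one : A) :=
  g4 (a ≻ b) b b (by rw [g_refl, g2])

lemma g_eq_of_ge {b c : A} (h : b ≻ c = (one : A)) : (c ≻ b) ≻ b = c := by
  rw [g3, h, g1]

lemma g_lub {a b c : A} (ha : a ≻ c = (one : A)) (hb : b ≻ c = (one : A)) :
    ((a ≻ b) ≻ b) ≻ c = (one : A) := by
  have h1 : (c ≻ b) ≻ (a ≻ b) = (one : A) := by
    apply g4
    rw [g_eq_of_ge hb]
    exact ha
  have h2 : ((a ≻ b) ≻ b) ≻ b = a ≻ b := by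
    rw [g3 (a ≻ b) b, g_le1, g1]
  have h4 : ((a ≻ b) ≻ b) ≻ ((c ≻ b) ≻ b) = (one : A) := by
    apply g4
    rw [h2]
    exact h1
  rwa [g_eq_of_ge hb] at h4

end Aux

section Aux0
variable {A : Type*} [G0Algebra A]

lemma g_nn (x : A) : (x ≻ (zero : A)) ≻ (zero : A) = x :=
  g_eq_of_ge (g17 x)

lemma g_antitone {a b : A} (h : a ≻ b = (one : A)) :
    (b ≻ (zero : A)) ≻ (a ≻ (zero : A)) = (one : A) :=
  g4 a (b ≻ (zero : A)) (zero : A) (by rw [g_nn]; exact h)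

end Aux0

theorem stmt11 {A : Type*} [G0Algebra A] (x y : A) :
    let m := (((x ≻ (zero : A)) ≻ (y ≻ (zero : A))) ≻ (y ≻ (zero : A))) ≻ (zero : A)
    m ≻ x = (one : A) ∧ m ≻ y = (one : A) ∧
    ∀ z : A, z ≻ x = (one : A) → z ≻ y = (one : A) → z ≻ m = (one : A) := by
  intro m
  refine ⟨?_, ?_, ?_⟩
  · have h := g_antitone (g_join_left (x ≻ (zero : A)) (y ≻ (zero : A)))
    rwa [g_nn] at h
  · have h := g_antitone (g_join_right (x ≻ (zero : A)) (y ≻ (zero : A)))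
    rwa [g_nn] at h
  · intro z hx hy
    have hJ := g_lub (g_antitone hx) (g_antitone hy)
    exact g4 _ z (zero : A) hJ
end

section
/- In any distributive G⁰-algebra, the cancellation law holds: if x ∧ y = x ∧ z and x ∨ y = x ∨ z, then y = z. -/
open GAlgebra

local infixr:70 " ≻ " => GAlgebra.succ

open G0Algebra

section Aux
variable {A : Type*} [GAlgebra A]

lemma my_refl (x : A) : x ≻ x = one := by
  have h := g3 x (one : A)
  rw [g2 x, g2 (one:A), g1] at h
  exact h.symm

lemma my_antisym {x y : A} (h : x ≻ y = one) (h' : y ≻ x = one) : x = y := by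
  have hg := g3 x y
  rw [h, h', g1, g1] at hg
  exact hg.symm

lemma my_m1 {a b : A} (h : a ≻ b = one) (c : A) : (b ≻ c) ≻ (a ≻ c) = one := by
  have h1 : (c ≻ b) ≻ (a ≻ b) = one := by rw [h, g2]
  have h2 : a ≻ ((c ≻ b) ≻ b) = one := g4 _ _ _ h1
  rw [g3] at h2
  exact g4 _ _ _ h2

lemma my_le_sup_right (x y : A) : y ≻ ((x ≻ y) ≻ y) = one :=
  g4 _ _ _ (by rw [my_refl, g2])

end Aux

lemma my_dneg {A : Type*} [G0Algebra A] (a : A) :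
    (a ≻ (zero : A)) ≻ (zero : A) = a := by
  have h := g3 a (zero : A)
  rw [g17, g1] at h
  exact h

theorem stmt14 {A : Type*} [G0Algebra A]
    (neg : A → A) (hneg : ∀ a : A, neg a = a ≻ (zero : A))
    (sup : A → A → A) (hsup : ∀ a b : A, sup a b = (a ≻ b) ≻ b)
    (inf : A → A → A) (hinf : ∀ a b : A, inf a b = neg (sup (neg a) (neg b)))
    (hdist : ∀ a b c : A, ((inf a b) ≻ c) ≻ (sup (a ≻ c) (b ≻ c)) = (one : A))
    (x y z : A) (h1 : inf x y = inf x z) (h2 : sup x y = sup x z) : y = z := by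
  -- inf a b ≤ b
  have step8 : ∀ a b : A, (inf a b) ≻ b = one := by
    intro a b
    have h := my_le_sup_right (a ≻ (zero : A)) (b ≻ (zero : A))
    have h2 := my_m1 h (zero : A)
    rw [my_dneg] at h2
    simp only [hinf, hsup, hneg]
    exact h2
  -- y ≤ sup x z, hence x ≻ z ≤ y ≻ z
  have key : ∀ u v : A, inf x u = inf x v → sup x u = sup x v → u ≻ v = one := by
    intro u v hi hs
    have hle : u ≻ ((x ≻ v) ≻ v) = one := by
      have h := my_le_sup_right x u
      rw [← hsup, hs, hsup] at h
      exact h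
    have hxv : (x ≻ v) ≻ (u ≻ v) = one := g4 _ _ _ hle
    have hd := hdist x u v
    rw [hsup (x ≻ v) (u ≻ v), hxv, g1, hi, step8 x v, g1] at hd
    exact hd
  exact my_antisym (key y z h1 h2) (key z y h1.symm h2.symm)
end

section
/- In any G₄⁰-algebra, ∼x ⊳ x = ∼x ≻ x, where x ⊳ y = x ≻ (x ≻ y) and ∼x = x ≻ 0. -/
open GAlgebra

local infixr:70 " ≻ " => GAlgebra.succ

open G0Algebra

class G40Algebra (A : Type*) extends G0Algebra A where
  g28 : ∀ x y, succ (succ (succ x (succ x y)) x) x = one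

open G40Algebra

theorem stmt17 {A : Type*} [G40Algebra A] (x : A) :
    (x ≻ (zero : A)) ≻ ((x ≻ (zero : A)) ≻ x) = (x ≻ (zero : A)) ≻ x := by
  have hrefl : ∀ a : A, a ≻ a = (one : A) := by
    intro a
    have := g3 a (one : A)
    simpa [g1, g2] using this.symm
  -- a ≤ b ≻ a
  have hle : ∀ a b : A, a ≻ (b ≻ a) = (one : A) := by
    intro a b
    exact g4 b a a (by rw [hrefl, g2])
  set n := x ≻ (zero : A) with hn
  have hn0 : n ≻ (zero : A) = x := by
    rw [hn, g3, g17, g1]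
  -- from g28 n 0 : ((n ≻ x) ≻ n) ≻ n = 1
  have h1 : ((n ≻ x) ≻ n) ≻ n = (one : A) := by
    have := g28 n (zero : A)
    rwa [hn0] at this
  have h2 : (n ≻ (n ≻ x)) ≻ (n ≻ x) = (one : A) := by
    rw [g3]; exact h1
  have h3 : (n ≻ x) ≻ (n ≻ (n ≻ x)) = (one : A) := hle (n ≻ x) n
  -- antisymmetry
  calc n ≻ (n ≻ x) = (one : A) ≻ (n ≻ (n ≻ x)) := by rw [g1]
    _ = ((n ≻ x) ≻ (n ≻ (n ≻ x))) ≻ (n ≻ (n ≻ x)) := by rw [h3]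
    _ = ((n ≻ (n ≻ x)) ≻ (n ≻ x)) ≻ (n ≻ x) := by rw [g3]
    _ = (one : A) ≻ (n ≻ x) := by rw [h2]
    _ = n ≻ x := g1 _
end
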